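/- Let u ∈ ℝⁿ be a unit vector, a ∈ ℝ, and Y a real symmetric n×n matrix. Then ‖(I + a uuᵀ) Y (I + a uuᵀ)‖_F² = ‖Y‖_F² + 2(2a + a²) · uᵀ Y² u + (2a + a²)² · (uᵀ Y u)², where ‖·‖_F is the Frobenius norm. -/

import Mathlib

open Matrix

theorem stmt_12 {n : ℕ} (u : Fin n → ℝ) (hu : ∑ i, u i ^ 2 = 1) (a : ℝ)
    (Y : Matrix (Fin n) (Fin n) ℝ) (hY : Y.IsSymm) :
    (((1 + a • vecMulVec u u) * Y * (1 + a • vecMulVec u u))ᵀ *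
        ((1 + a • vecMulVec u u) * Y * (1 + a • vecMulVec u u))).trace =
      (Yᵀ * Y).trace + 2 * (2 * a + a ^ 2) * (u ⬝ᵥ (Y * Y).mulVec u)
        + (2 * a + a ^ 2) ^ 2 * (u ⬝ᵥ Y.mulVec u) ^ 2 := by
  set P := vecMulVec u u with hP
  have hPsymm : Pᵀ = P := by
    ext i j; simp [hP, vecMulVec_apply, mul_comm]
  have hP2 : P * P = P := by
    ext i j
    simp only [hP, mul_apply, vecMulVec_apply]
    calc ∑ k, u i * u k * (u k * u j) = (∑ k, u k ^ 2) * (u i * u j) := by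
          rw [Finset.sum_mul]; apply Finset.sum_congr rfl; intros; ring
      _ = u i * u j := by rw [hu, one_mul]
  have htrP : ∀ M : Matrix (Fin n) (Fin n) ℝ, (P * M).trace = u ⬝ᵥ M.mulVec u := by
    intro M
    simp only [trace, diag, mul_apply, hP, vecMulVec_apply, dotProduct, mulVec]
    rw [Finset.sum_comm]
    apply Finset.sum_congr rfl; intro j _
    rw [Finset.mul_sum]
    apply Finset.sum_congr rfl; intro i _; ring
  have hPMP : ∀ M : Matrix (Fin n) (Fin n) ℝ, P * M * P = (u ⬝ᵥ M.mulVec u) • P := by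
    intro M
    ext i j
    simp only [mul_apply, hP, vecMulVec_apply, Matrix.smul_apply, smul_eq_mul, dotProduct, mulVec]
    simp only [Finset.sum_mul, Finset.mul_sum]
    rw [Finset.sum_comm]
    exact Finset.sum_congr rfl fun x _ => Finset.sum_congr rfl fun y _ => by ring
  set c := 2 * a + a ^ 2 with hc
  have hBsymm : (1 + a • P)ᵀ = 1 + a • P := by
    rw [transpose_add, transpose_smul, transpose_one, hPsymm]
  have hB2 : (1 + a • P) * (1 + a • P) = 1 + c • P := by
    simp only [add_mul, mul_add, one_mul, mul_one, smul_mul_assoc, mul_smul_comm, smul_smul,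
      hP2, hc]
    module
  have hT : ((1 + a • P) * Y * (1 + a • P))ᵀ = (1 + a • P) * Y * (1 + a • P) := by
    rw [transpose_mul, transpose_mul, hBsymm, hY.eq, mul_assoc]
  rw [hT]
  have key : ((1 + a • P) * Y * (1 + a • P)) * ((1 + a • P) * Y * (1 + a • P))
      = (1 + a • P) * ((Y * ((1 + a • P) * (1 + a • P)) * Y) * (1 + a • P)) := by
    noncomm_ring
  rw [key, trace_mul_comm, hB2, mul_assoc (Y * (1 + c • P) * Y), hB2]
  have hYP : Y * (1 + c • P) = Y + c • (Y * P) := by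
    rw [mul_add, mul_one, mul_smul_comm]
  have d2 : u ⬝ᵥ (Y * Y).mulVec u = (P * (Y * Y)).trace := (htrP _).symm
  have hE : (Y + c • (Y * P)) * (Y + c • (Y * P))
      = Y * Y + c • (Y * Y * P) + c • (Y * P * Y) + (c * c) • (Y * P * Y * P) := by
    simp only [add_mul, mul_add, mul_smul_comm, smul_mul_assoc, smul_smul, ← mul_assoc]
    module
  rw [mul_assoc (Y * (1 + c • P)), hYP, hE, hY.eq]
  have t2 : (Y * Y * P).trace = u ⬝ᵥ (Y * Y) *ᵥ u := by
    rw [trace_mul_comm, htrP]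
  have t3 : (Y * P * Y).trace = u ⬝ᵥ (Y * Y) *ᵥ u := by
    rw [trace_mul_comm, ← mul_assoc, t2]
  have t4 : (Y * P * Y * P).trace = (u ⬝ᵥ Y *ᵥ u) ^ 2 := by
    rw [trace_mul_comm, show P * (Y * P * Y) = P * Y * P * Y from by noncomm_ring,
      hPMP, smul_mul_assoc, trace_smul, htrP, smul_eq_mul, sq]
  simp only [trace_add, trace_smul, t2, t3, t4, smul_eq_mul]
  ring
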